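/- The singular series for the Goldbach problem is bounded below: for every even positive integer 2n, ∑_{q=1}^∞ μ(q)^2 c_q(−2n)/φ(q)^2 ≥ c for some absolute constant c > 0 (in fact the series equals 2 ∏_{p>2}(1 − 1/(p−1)^2) · ∏_{p | n, p > 2} (p−1)/(p−2) ≥ some positive constant). -/

import Mathlib

/-- The Ramanujan sum `c_q(n) = ∑_{a=1, (a,q)=1}^{q} e(an/q)`, where `e(x) = exp(2πix)`. -/
noncomputable def ramanujanSum (q : ℕ) (n : ℤ) : ℂ :=
  ∑ a ∈ (Finset.Icc 1 q).filter (fun a => Nat.gcd a q = 1),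
    Complex.exp (2 * Real.pi * Complex.I * ((a : ℤ) * n) / q)

namespace Goldbach

open Complex Finset ArithmeticFunction

/-! ### Evaluation of the Ramanujan sum -/

lemma geom_aux {N : ℕ} (hN : 0 < N) (k : ℤ) :
    ∑ b ∈ Finset.Icc 1 N, Complex.exp (2 * Real.pi * Complex.I * ((b : ℤ) * k) / N) =
      if (N : ℤ) ∣ k then (N : ℂ) else 0 := by
  have hN0 : (N : ℂ) ≠ 0 := Nat.cast_ne_zero.mpr hN.ne'
  set z : ℂ := Complex.exp (2 * Real.pi * Complex.I * k / N) with hz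
  have hpow : ∀ b : ℕ, Complex.exp (2 * Real.pi * Complex.I * ((b : ℤ) * k) / N) = z ^ b := by
    intro b
    rw [hz, ← Complex.exp_nat_mul]
    congr 1
    push_cast
    ring
  have hzN : z ^ N = 1 := by
    rw [← Complex.exp_nat_mul]
    have : (N : ℂ) * (2 * Real.pi * Complex.I * k / N) = (k : ℤ) * (2 * Real.pi * Complex.I) := by
      field_simp
    rw [this, Complex.exp_int_mul_two_pi_mul_I]
  simp_rw [hpow]
  by_cases hdvd : (N : ℤ) ∣ k
  · rw [if_pos hdvd]
    obtain ⟨j, hj⟩ := hdvd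
    have hz : z = 1 := by
      rw [hz]
      have : 2 * Real.pi * Complex.I * k / N = (j : ℤ) * (2 * Real.pi * Complex.I) := by
        rw [hj]; push_cast; field_simp
      rw [this, Complex.exp_int_mul_two_pi_mul_I]
    simp [hz, Nat.card_Icc]
  · have hz1 : z ≠ 1 := by
      intro h
      rw [hz, Complex.exp_eq_one_iff] at h
      obtain ⟨j, hj⟩ := h
      apply hdvd
      refine ⟨j, ?_⟩
      have h2 : (2 : ℂ) * Real.pi * Complex.I ≠ 0 := by
        simp [Real.pi_ne_zero, Complex.I_ne_zero]
      have : (k : ℂ) = N * j := by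
        field_simp at hj
        refine mul_right_cancel₀ h2 ?_
        rw [mul_comm ((k:ℂ)), hj]; ring
      exact_mod_cast this
    rw [if_neg hdvd]
    have hins : Finset.range (N + 1) = insert 0 (Finset.Icc 1 N) := by
      ext x; simp [Finset.mem_range, Finset.mem_Icc]; omega
    have hsum : ∑ b ∈ Finset.range (N + 1), z ^ b = 1 + ∑ b ∈ Finset.Icc 1 N, z ^ b := by
      rw [hins, Finset.sum_insert (by simp)]; simp
    have hgeom : ∑ b ∈ Finset.range (N + 1), z ^ b = 1 := by
      rw [geom_sum_eq hz1, pow_succ, hzN, one_mul, div_self (sub_ne_zero.mpr hz1)]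
    have := hsum.symm.trans hgeom
    linear_combination this

lemma moebius_ind (n : ℕ) (hn : n ≠ 0) :
    ∑ d ∈ n.divisors, (ArithmeticFunction.moebius d : ℤ) = if n = 1 then 1 else 0 := by
  have := congrArg (fun f : ArithmeticFunction ℤ => f n) moebius_mul_coe_zeta
  simp only [mul_apply, one_apply] at this
  rw [← this, Nat.sum_divisorsAntidiagonal
    (f := fun x y => (moebius x : ℤ) * ((zeta : ArithmeticFunction ℕ) : ArithmeticFunction ℤ) y)]
  refine Finset.sum_congr rfl fun d hd => ?_
  rw [Nat.mem_divisors] at hd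
  have hd0 : d ≠ 0 := fun h => by subst h; exact hd.2 (Nat.eq_zero_of_zero_dvd hd.1)
  have : n / d ≠ 0 := Nat.div_ne_zero_iff.mpr ⟨hd0, Nat.le_of_dvd (Nat.pos_of_ne_zero hn) hd.1⟩
  simp [ArithmeticFunction.natCoe_apply, ArithmeticFunction.zeta_apply, this]

lemma ram_eq (q : ℕ) (hq : 0 < q) (k : ℤ) :
    ramanujanSum q k =
      ∑ e ∈ q.divisors, (moebius (q / e) : ℂ) * (if (e : ℤ) ∣ k then (e : ℂ) else 0) := by
  set E : ℕ → ℂ := fun a => Complex.exp (2 * Real.pi * Complex.I * ((a : ℤ) * k) / q) with hE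
  have step1 : ramanujanSum q k =
      ∑ a ∈ Finset.Icc 1 q, ∑ d ∈ q.divisors, (if d ∣ a then (moebius d : ℂ) * E a else 0) := by
    rw [ramanujanSum, Finset.sum_filter]
    refine Finset.sum_congr rfl fun a _ => ?_
    have hfilter : q.divisors.filter (· ∣ a) = (Nat.gcd a q).divisors := by
      ext d
      simp only [Finset.mem_filter, Nat.mem_divisors, Nat.dvd_gcd_iff]
      constructor
      · rintro ⟨⟨h1, h2⟩, h3⟩; exact ⟨⟨h3, h1⟩, Nat.gcd_ne_zero_right h2⟩
      · rintro ⟨⟨h1, h2⟩, _⟩; exact ⟨⟨h2, hq.ne'⟩, h1⟩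
    have h := moebius_ind (Nat.gcd a q) (Nat.gcd_ne_zero_right hq.ne')
    calc (if Nat.gcd a q = 1 then E a else 0)
        = (if Nat.gcd a q = 1 then (1 : ℂ) else 0) * E a := by split <;> simp
      _ = (∑ d ∈ (Nat.gcd a q).divisors, (moebius d : ℂ)) * E a := by
          congr 1
          calc (if Nat.gcd a q = 1 then (1:ℂ) else 0)
              = ((if Nat.gcd a q = 1 then (1:ℤ) else 0 : ℤ) : ℂ) := by split <;> simp
            _ = (((∑ d ∈ (Nat.gcd a q).divisors, (moebius d : ℤ)) : ℤ) : ℂ) := by rw [h]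
            _ = ∑ d ∈ (Nat.gcd a q).divisors, (moebius d : ℂ) := by push_cast; rfl
      _ = ∑ d ∈ q.divisors, (if d ∣ a then (moebius d : ℂ) * E a else 0) := by
          rw [← hfilter, Finset.sum_filter, Finset.sum_mul]
          refine Finset.sum_congr rfl fun d _ => ?_
          split <;> simp
  rw [step1, Finset.sum_comm]
  have inner : ∀ d ∈ q.divisors,
      ∑ a ∈ Finset.Icc 1 q, (if d ∣ a then (moebius d : ℂ) * E a else 0)
        = (moebius d : ℂ) * (if ((q / d : ℕ) : ℤ) ∣ k then ((q / d : ℕ) : ℂ) else 0) := by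
    intro d hd
    rw [Nat.mem_divisors] at hd
    obtain ⟨⟨t, rfl⟩, -⟩ := hd
    have hd0 : d ≠ 0 := by rintro rfl; simp at hq
    have ht0 : t ≠ 0 := by rintro rfl; simp at hq
    have hqd : (d * t) / d = t := by rw [Nat.mul_div_cancel_left _ (Nat.pos_of_ne_zero hd0)]
    have himg : (Finset.Icc 1 (d * t)).filter (fun a => d ∣ a)
        = (Finset.Icc 1 t).image (fun b => d * b) := by
      ext a
      simp only [Finset.mem_filter, Finset.mem_Icc, Finset.mem_image]
      constructor
      · rintro ⟨⟨h1, h2⟩, c, rfl⟩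
        exact ⟨c, ⟨Nat.pos_of_ne_zero (by rintro rfl; simp at h1),
          Nat.le_of_mul_le_mul_left h2 (Nat.pos_of_ne_zero hd0)⟩, rfl⟩
      · rintro ⟨b, ⟨hb1, hb2⟩, rfl⟩
        exact ⟨⟨Nat.mul_pos (Nat.pos_of_ne_zero hd0) hb1, Nat.mul_le_mul le_rfl hb2⟩, ⟨b, rfl⟩⟩
    rw [← Finset.sum_filter, himg, Finset.sum_image
      (fun b1 _ b2 _ h => Nat.eq_of_mul_eq_mul_left (Nat.pos_of_ne_zero hd0) h),
      ← Finset.mul_sum]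
    congr 1
    have key : ∀ b : ℕ, E (d * b) =
        Complex.exp (2 * Real.pi * Complex.I * ((b : ℤ) * k) / (t : ℕ)) := by
      intro b
      rw [hE]
      simp only []
      congr 1
      have hdc : (d : ℂ) ≠ 0 := Nat.cast_ne_zero.mpr hd0
      have htc : (t : ℂ) ≠ 0 := Nat.cast_ne_zero.mpr ht0
      push_cast
      field_simp
    simp_rw [key]
    rw [geom_aux (Nat.pos_of_ne_zero ht0) k, hqd]
  rw [Finset.sum_congr rfl inner]
  rw [← Nat.sum_div_divisors q
    (fun e => (moebius (q / e) : ℂ) * (if (e : ℤ) ∣ k then (e : ℂ) else 0))]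
  refine Finset.sum_congr rfl fun d hd => ?_
  rw [Nat.div_div_self (Nat.mem_divisors.mp hd).1 hq.ne']

/-! ### The arithmetic function `Rf` -/

/-- `e ↦ e` if `e ∣ m`, else 0. -/
def hfun (m : ℕ) : ArithmeticFunction ℤ :=
  ⟨fun e => if e ∣ m ∧ e ≠ 0 then (e : ℤ) else 0, by simp⟩

lemma hfun_apply (m e : ℕ) : hfun m e = if e ∣ m ∧ e ≠ 0 then (e : ℤ) else 0 := rfl

lemma hfun_mult (m : ℕ) : (hfun m).IsMultiplicative := by
  constructor
  · simp [hfun_apply]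
  · intro a b hab
    simp only [hfun_apply]
    have hmul : (a * b ∣ m ∧ a * b ≠ 0) ↔ ((a ∣ m ∧ a ≠ 0) ∧ (b ∣ m ∧ b ≠ 0)) := by
      constructor
      · rintro ⟨h1, h2⟩
        exact ⟨⟨(dvd_mul_right a b).trans h1, left_ne_zero_of_mul h2⟩,
               ⟨(dvd_mul_left b a).trans h1, right_ne_zero_of_mul h2⟩⟩
      · rintro ⟨⟨ha1, ha2⟩, hb1, hb2⟩
        exact ⟨hab.mul_dvd_of_dvd_of_dvd ha1 hb1, mul_ne_zero ha2 hb2⟩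
    by_cases ha : a ∣ m ∧ a ≠ 0
    · by_cases hb : b ∣ m ∧ b ≠ 0
      · rw [if_pos (hmul.mpr ⟨ha, hb⟩), if_pos ha, if_pos hb]; push_cast; ring
      · rw [if_neg (fun h => hb (hmul.mp h).2), if_pos ha, if_neg hb, mul_zero]
    · rw [if_neg (fun h => ha (hmul.mp h).1), if_neg ha, zero_mul]

/-- The Dirichlet convolution giving the Ramanujan sum. -/
def Rf (m : ℕ) : ArithmeticFunction ℤ := hfun m * ArithmeticFunction.moebius

lemma Rf_mult (m : ℕ) : (Rf m).IsMultiplicative :=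
  (hfun_mult m).mul isMultiplicative_moebius

lemma Rf_apply (m q : ℕ) (hq : q ≠ 0) :
    (Rf m q : ℤ) = ∑ e ∈ q.divisors, (if e ∣ m then (e : ℤ) else 0) * moebius (q / e) := by
  rw [Rf, mul_apply, Nat.sum_divisorsAntidiagonal (f := fun x y => hfun m x * moebius y)]
  refine Finset.sum_congr rfl fun e he => ?_
  rw [Nat.mem_divisors] at he
  have he0 : e ≠ 0 := by rintro rfl; exact hq (Nat.eq_zero_of_zero_dvd he.1)
  rw [hfun_apply]
  by_cases h : e ∣ m <;> simp [h, he0]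

lemma Rf_prime (m p : ℕ) (hp : p.Prime) :
    (Rf m p : ℤ) = (if p ∣ m then (p : ℤ) else 0) - 1 := by
  rw [Rf_apply m p hp.ne_zero, hp.divisors, Finset.sum_pair hp.one_lt.ne]
  simp [Nat.div_self hp.pos, moebius_apply_prime hp, Nat.one_dvd]
  ring

/-- The Ramanujan sum equals `Rf`. -/
lemma ram_eq_Rf (m q : ℕ) (hq : 0 < q) :
    ramanujanSum q (-(m : ℤ)) = ((Rf m q : ℤ) : ℂ) := by
  rw [ram_eq q hq (-(m : ℤ)), Rf_apply m q hq.ne']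
  push_cast
  refine Finset.sum_congr rfl fun e he => ?_
  have : ((e : ℤ) ∣ -(m : ℤ)) ↔ e ∣ m := by
    rw [dvd_neg, Int.natCast_dvd_natCast]
  rw [mul_comm]
  congr 1
  split <;> split <;> first | rfl | (exfalso; tauto)

/-! ### The real-valued term function -/

noncomputable def F (m : ℕ) (q : ℕ) : ℝ :=
  (moebius q : ℝ) ^ 2 * (Rf m q : ℝ) / (Nat.totient q : ℝ) ^ 2

lemma F_zero (m : ℕ) : F m 0 = 0 := by simp [F]

lemma F_one (m : ℕ) : F m 1 = 1 := by
  simp [F, (Rf_mult m).map_one]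

lemma F_mult (m : ℕ) {a b : ℕ} (hab : a.Coprime b) :
    F m (a * b) = F m a * F m b := by
  unfold F
  rw [isMultiplicative_moebius.map_mul_of_coprime hab,
    (Rf_mult m).map_mul_of_coprime hab, Nat.totient_mul hab]
  push_cast
  rw [div_mul_div_comm]
  ring

lemma F_not_squarefree (m q : ℕ) (hq : ¬ Squarefree q) : F m q = 0 := by
  simp [F, moebius_eq_zero_of_not_squarefree hq]

lemma F_prime (m p : ℕ) (hp : p.Prime) :
    F m p = ((if p ∣ m then (p : ℝ) else 0) - 1) / ((p : ℝ) - 1) ^ 2 := by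
  unfold F
  rw [moebius_apply_prime hp, Nat.totient_prime hp]
  have := Rf_prime m p hp
  rw [this]
  have hp1 : (1 : ℕ) ≤ p := hp.one_lt.le
  push_cast [Nat.cast_sub hp1]
  split <;> ring

noncomputable def bfun (p : ℕ) : ℝ := if p = 2 then (2:ℝ) else 1 - 1/((p:ℝ)-1)^2

lemma F_prime_ge (m p : ℕ) (hp : p.Prime) (h2 : 2 ∣ m) :
    bfun p ≤ 1 + F m p := by
  rw [F_prime m p hp, bfun]
  by_cases hp2 : p = 2
  · subst hp2
    rw [if_pos rfl, if_pos h2]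
    norm_num
  · rw [if_neg hp2]
    have hp3 : 3 ≤ p := by have := hp.two_le; omega
    have h3r : (3:ℝ) ≤ (p:ℝ) := by exact_mod_cast hp3
    have hD : (0:ℝ) < ((p:ℝ) - 1) ^ 2 := by nlinarith
    have hc : (0:ℝ) ≤ (if p ∣ m then (p:ℝ) else 0) := by split <;> positivity
    have key : (-1:ℝ)/((p:ℝ)-1)^2 ≤ ((if p ∣ m then (p:ℝ) else 0) - 1)/((p:ℝ)-1)^2 :=
      (div_le_div_iff_of_pos_right hD).mpr (by linarith)
    have hr : 1 - 1/((p:ℝ)-1)^2 = 1 + (-1)/((p:ℝ)-1)^2 := by ring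
    linarith

lemma bfun_pos {p : ℕ} (hp : p.Prime) : (0:ℝ) < bfun p := by
  rw [bfun]
  by_cases hp2 : p = 2
  · simp [hp2]
  · rw [if_neg hp2]
    have hp3 : 3 ≤ p := by have := hp.two_le; omega
    have : (2:ℝ) ≤ (p:ℝ) - 1 := by
      have : (3:ℝ) ≤ (p:ℝ) := by exact_mod_cast hp3
      linarith
    have h4 : (4:ℝ) ≤ ((p:ℝ)-1)^2 := by nlinarith
    have : 1 / ((p:ℝ)-1)^2 ≤ 1/4 := by
      apply div_le_div_of_nonneg_left <;> nlinarith
    linarith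

/-! ### Totient lower bound and summability -/

lemma totient_sf {q : ℕ} (hq : Squarefree q) :
    Nat.totient q = ∏ p ∈ q.primeFactors, (p - 1) := by
  have h := Nat.totient_mul_prod_primeFactors q
  rw [Nat.prod_primeFactors_of_squarefree hq] at h
  exact Nat.eq_of_mul_eq_mul_left hq.ne_zero.bot_lt
    (by rw [mul_comm (Nat.totient q) q] at h; exact h)

lemma prime_pow_bound {p : ℕ} (hp : p.Prime) (h5 : 5 ≤ p) : p ^ 3 ≤ (p - 1) ^ 4 := by
  obtain ⟨t, rfl⟩ : ∃ t, p = t + 5 := ⟨p - 5, by omega⟩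
  have h : t + 5 - 1 = t + 4 := by omega
  rw [h]
  nlinarith [sq_nonneg t]

lemma sf_totient_bound {q : ℕ} (hq : Squarefree q) : q ^ 3 ≤ 16 * Nat.totient q ^ 4 := by
  rw [totient_sf hq]
  conv_lhs => rw [← Nat.prod_primeFactors_of_squarefree hq]
  rw [← Finset.prod_pow, ← Finset.prod_pow]
  set S := q.primeFactors with hS
  have hprime : ∀ p ∈ S, p.Prime := fun p hp => Nat.prime_of_mem_primeFactors hp
  rw [← Finset.prod_filter_mul_prod_filter_not S (· ≤ 3) (· ^ 3),
      ← Finset.prod_filter_mul_prod_filter_not S (· ≤ 3) (fun p => (p - 1) ^ 4)]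
  have hB : ∏ p ∈ S.filter (¬ · ≤ 3), p ^ 3 ≤ ∏ p ∈ S.filter (¬ · ≤ 3), (p - 1) ^ 4 := by
    apply Finset.prod_le_prod'
    intro p hp
    rw [Finset.mem_filter] at hp
    have hpp := hprime p hp.1
    have h5 : 5 ≤ p := by
      have h4 : 4 ≤ p := by omega
      rcases Nat.lt_or_ge p 5 with h | h
      · interval_cases p
        · norm_num at hpp
      · exact h
    exact prime_pow_bound hpp h5
  have hA : ∏ p ∈ S.filter (· ≤ 3), p ^ 3 ≤ 16 * ∏ p ∈ S.filter (· ≤ 3), (p - 1) ^ 4 := by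
    have hsub : S.filter (· ≤ 3) ⊆ ({2, 3} : Finset ℕ) := by
      intro p hp
      rw [Finset.mem_filter] at hp
      have := (hprime p hp.1).two_le
      have h3 := hp.2
      simp only [Finset.mem_insert, Finset.mem_singleton]
      omega
    have hmem : ∀ x ∈ S.filter (· ≤ 3), x = 2 ∨ x = 3 := fun x hx => by
      have := hsub hx; simpa using this
    by_cases h2 : 2 ∈ S.filter (· ≤ 3) <;> by_cases h3 : 3 ∈ S.filter (· ≤ 3)
    · have hAe : S.filter (· ≤ 3) = {2, 3} := Finset.Subset.antisymm hsub (by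
        intro x hx
        simp only [Finset.mem_insert, Finset.mem_singleton] at hx
        rcases hx with rfl | rfl <;> assumption)
      rw [hAe]; decide
    · have hAe : S.filter (· ≤ 3) = {2} := by
        apply Finset.Subset.antisymm
        · intro x hx
          rcases hmem x hx with rfl | rfl
          · simp
          · exact absurd hx h3
        · intro x hx
          simp only [Finset.mem_singleton] at hx; subst hx; exact h2
      rw [hAe]; decide
    · have hAe : S.filter (· ≤ 3) = {3} := by
        apply Finset.Subset.antisymm
        · intro x hx
          rcases hmem x hx with rfl | rfl
          · exact absurd hx h2
          · simp
        · intro x hx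
          simp only [Finset.mem_singleton] at hx; subst hx; exact h3
      rw [hAe]; decide
    · have hAe : S.filter (· ≤ 3) = ∅ := by
        apply Finset.eq_empty_of_forall_notMem
        intro x hx
        rcases hmem x hx with rfl | rfl
        · exact h2 hx
        · exact h3 hx
      rw [hAe]; decide
  calc (∏ p ∈ S.filter (· ≤ 3), p ^ 3) * ∏ p ∈ S.filter (¬ · ≤ 3), p ^ 3
      ≤ (16 * ∏ p ∈ S.filter (· ≤ 3), (p - 1) ^ 4) * ∏ p ∈ S.filter (¬ · ≤ 3), (p - 1) ^ 4 :=
        Nat.mul_le_mul hA hB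
    _ = 16 * ((∏ p ∈ S.filter (· ≤ 3), (p - 1) ^ 4) * ∏ p ∈ S.filter (¬ · ≤ 3), (p - 1) ^ 4) := by
        ring

lemma Rf_abs_bound (m q : ℕ) (hm : m ≠ 0) (hq : q ≠ 0) :
    |(Rf m q : ℤ)| ≤ ∑ e ∈ m.divisors, (e : ℤ) := by
  rw [Rf_apply m q hq]
  calc |∑ e ∈ q.divisors, (if e ∣ m then (e : ℤ) else 0) * moebius (q / e)|
      ≤ ∑ e ∈ q.divisors, |(if e ∣ m then (e : ℤ) else 0) * moebius (q / e)| :=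
        Finset.abs_sum_le_sum_abs _ _
    _ ≤ ∑ e ∈ q.divisors, (if e ∣ m then (e : ℤ) else 0) := by
        refine Finset.sum_le_sum fun e he => ?_
        rw [abs_mul]
        by_cases h : e ∣ m
        · simp only [if_pos h]
          rw [abs_of_nonneg (show (0:ℤ) ≤ (e:ℤ) by positivity)]
          calc (e : ℤ) * |moebius (q / e)| ≤ (e : ℤ) * 1 := by
                have := abs_moebius_le_one (n := q / e)
                exact mul_le_mul_of_nonneg_left this (by positivity)
            _ = e := mul_one _
        · simp [h]
    _ = ∑ e ∈ q.divisors.filter (· ∣ m), (e : ℤ) := by rw [Finset.sum_filter]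
    _ ≤ ∑ e ∈ m.divisors, (e : ℤ) := by
        refine Finset.sum_le_sum_of_subset_of_nonneg ?_ (fun e _ _ => by positivity)
        intro e he
        rw [Finset.mem_filter, Nat.mem_divisors] at he
        exact Nat.mem_divisors.mpr ⟨he.2, hm⟩

lemma F_abs_bound (m : ℕ) (hm : m ≠ 0) (q : ℕ) :
    |F m q| ≤ (4 * ∑ e ∈ m.divisors, (e : ℝ)) / (q : ℝ) ^ ((3:ℝ)/2) := by
  have hK0 : (0:ℝ) ≤ ∑ e ∈ m.divisors, (e : ℝ) := Finset.sum_nonneg fun e _ => by positivity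
  rcases eq_or_ne q 0 with rfl | hq
  · simp [F_zero]
  by_cases hsf : Squarefree q
  · have hq1 : 1 ≤ q := Nat.one_le_iff_ne_zero.mpr hq
    have hφ : 0 < Nat.totient q := Nat.totient_pos.mpr (Nat.pos_of_ne_zero hq)
    have h1 : |F m q| ≤ (∑ e ∈ m.divisors, (e : ℝ)) / (Nat.totient q : ℝ) ^ 2 := by
      rw [F, abs_div, _root_.abs_of_nonneg (by positivity : (0:ℝ) ≤ (Nat.totient q : ℝ) ^ 2)]
      apply div_le_div_of_nonneg_right ?_ (by positivity)
      have hb := Rf_abs_bound m q hm hq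
      have habs : |(Rf m q : ℝ)| = ((|(Rf m q : ℤ)| : ℤ) : ℝ) := by rw [Int.cast_abs]
      calc |(moebius q : ℝ) ^ 2 * (Rf m q : ℝ)|
          = (moebius q : ℝ) ^ 2 * |(Rf m q : ℝ)| := by
            rw [abs_mul, _root_.abs_of_nonneg (by positivity)]
        _ ≤ 1 * |(Rf m q : ℝ)| := by
            apply mul_le_mul_of_nonneg_right ?_ (abs_nonneg _)
            have := abs_moebius_le_one (n := q)
            have h1 : |(moebius q : ℝ)| ≤ 1 := by exact_mod_cast this
            calc (moebius q : ℝ) ^ 2 = |(moebius q : ℝ)| ^ 2 := (_root_.sq_abs _).symm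
              _ ≤ 1 := by nlinarith [abs_nonneg ((moebius q : ℝ))]
        _ = |(Rf m q : ℝ)| := one_mul _
        _ ≤ ∑ e ∈ m.divisors, (e : ℝ) := by
            rw [habs]
            calc ((|(Rf m q : ℤ)| : ℤ) : ℝ) ≤ ((∑ e ∈ m.divisors, (e : ℤ) : ℤ) : ℝ) := by
                  exact_mod_cast hb
              _ = ∑ e ∈ m.divisors, (e : ℝ) := by push_cast; rfl
    have h2 : (q : ℝ) ^ ((3:ℝ)/2) ≤ 4 * (Nat.totient q : ℝ) ^ 2 := by
      have hb := sf_totient_bound hsf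
      have hbR : (q : ℝ) ^ (3:ℕ) ≤ 16 * (Nat.totient q : ℝ) ^ (4:ℕ) := by exact_mod_cast hb
      have hsq : Real.sqrt ((q:ℝ) ^ (3:ℕ)) ≤ Real.sqrt (16 * (Nat.totient q : ℝ) ^ (4:ℕ)) :=
        Real.sqrt_le_sqrt hbR
      have e1 : Real.sqrt ((q:ℝ) ^ (3:ℕ)) = (q : ℝ) ^ ((3:ℝ)/2) := by
        rw [Real.sqrt_eq_rpow, ← Real.rpow_natCast (q:ℝ) 3, ← Real.rpow_mul (by positivity)]
        norm_num
      have e2 : Real.sqrt (16 * (Nat.totient q : ℝ) ^ (4:ℕ)) = 4 * (Nat.totient q : ℝ) ^ 2 := by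
        rw [show (16 : ℝ) * (Nat.totient q : ℝ) ^ (4:ℕ)
              = (4 * (Nat.totient q : ℝ) ^ 2) ^ 2 by ring]
        exact Real.sqrt_sq (by positivity)
      rw [← e1, ← e2]; exact hsq
    have hq32 : (0:ℝ) < (q : ℝ) ^ ((3:ℝ)/2) := by
      apply Real.rpow_pos_of_pos
      exact_mod_cast Nat.pos_of_ne_zero hq
    have hφ2 : (0:ℝ) < (Nat.totient q : ℝ) ^ 2 := by positivity
    calc |F m q| ≤ (∑ e ∈ m.divisors, (e : ℝ)) / (Nat.totient q : ℝ) ^ 2 := h1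
      _ ≤ (4 * ∑ e ∈ m.divisors, (e : ℝ)) / (q : ℝ) ^ ((3:ℝ)/2) := by
          rw [div_le_div_iff₀ hφ2 hq32]
          calc (∑ e ∈ m.divisors, (e : ℝ)) * (q : ℝ) ^ ((3:ℝ)/2)
              ≤ (∑ e ∈ m.divisors, (e : ℝ)) * (4 * (Nat.totient q : ℝ) ^ 2) :=
                mul_le_mul_of_nonneg_left h2 hK0
            _ = 4 * (∑ e ∈ m.divisors, (e : ℝ)) * (Nat.totient q : ℝ) ^ 2 := by ring
  · rw [F_not_squarefree m q hsf]
    simp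
    positivity

lemma F_summable_norm (m : ℕ) (hm : m ≠ 0) : Summable (fun q => ‖F m q‖) := by
  have hsum : Summable (fun q : ℕ =>
      (4 * ∑ e ∈ m.divisors, (e : ℝ)) * (1 / (q:ℝ) ^ ((3:ℝ)/2))) :=
    (Real.summable_one_div_nat_rpow.mpr (by norm_num)).mul_left _
  apply Summable.of_nonneg_of_le (fun q => norm_nonneg _) (fun q => ?_) hsum
  rw [Real.norm_eq_abs]
  calc |F m q| ≤ (4 * ∑ e ∈ m.divisors, (e : ℝ)) / (q:ℝ) ^ ((3:ℝ)/2) := F_abs_bound m hm q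
    _ = _ := by rw [div_eq_mul_one_div]

/-! ### The Euler factor and product bounds -/

lemma tsum_F_pow (m : ℕ) {p : ℕ} (hp : p.Prime) :
    ∑' e : ℕ, F m (p ^ e) = 1 + F m p := by
  rw [tsum_eq_sum (s := {0, 1}) ?h]
  · rw [Finset.sum_pair (by norm_num)]
    rw [pow_zero, pow_one, F_one m]
  · intro b hb
    simp only [Finset.mem_insert, Finset.mem_singleton] at hb
    push_neg at hb
    apply F_not_squarefree
    intro hsf
    have hdvd : p * p ∣ p ^ b := by
      rw [← sq]
      exact pow_dvd_pow p (by omega)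
    exact hp.not_isUnit (hsf p hdvd)

lemma prod_Icc_telescope (N : ℕ) (hN : 1 ≤ N) :
    ∏ k ∈ Finset.Icc 2 N, (1 - 1/(k:ℝ)^2) = ((N:ℝ)+1)/(2*(N:ℝ)) := by
  induction N, hN using Nat.le_induction with
  | base => rw [Finset.Icc_eq_empty (by omega)]; norm_num
  | succ N hN ih =>
    have hins : Finset.Icc 2 (N+1) = insert (N+1) (Finset.Icc 2 N) := by
      ext x; simp [Finset.mem_Icc, Finset.mem_insert]; omega
    rw [hins, Finset.prod_insert (by simp), ih]
    have hN0 : (N:ℝ) ≥ 1 := by exact_mod_cast hN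
    field_simp
    push_cast
    ring

lemma prod_bfun_ge (N : ℕ) : 1 ≤ ∏ p ∈ N.primesBelow, bfun p := by
  rcases Nat.lt_or_ge N 3 with hN | hN
  · have : N.primesBelow = ∅ := by
      ext p
      simp only [Nat.mem_primesBelow, Finset.notMem_empty, iff_false, not_and]
      intro hlt hp
      have := hp.two_le
      omega
    simp [this]
  · have h2 : 2 ∈ N.primesBelow := Nat.mem_primesBelow.mpr ⟨by omega, Nat.prime_two⟩
    rw [← Finset.mul_prod_erase _ _ h2]
    have hb2 : bfun 2 = 2 := by simp [bfun]
    set S : Finset ℕ := N.primesBelow.erase 2 with hS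
    have hSmem : ∀ p ∈ S, p.Prime ∧ 3 ≤ p ∧ p ≤ N := by
      intro p hp
      rw [hS, Finset.mem_erase, Nat.mem_primesBelow] at hp
      exact ⟨hp.2.2, by have := hp.2.2.two_le; omega, by omega⟩
    have hinj : Set.InjOn (fun x : ℕ => x - 1) S := by
      intro a ha b hb hab
      have h3a := (hSmem a ha).2.1
      have h3b := (hSmem b hb).2.1
      simp only at hab
      omega
    have himg : ∏ p ∈ S, bfun p
        = ∏ j ∈ S.image (fun x : ℕ => x - 1), (1 - 1/(j:ℝ)^2) := by
      rw [Finset.prod_image hinj]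
      refine Finset.prod_congr rfl fun p hp => ?_
      obtain ⟨hpp, h3, _⟩ := hSmem p hp
      rw [bfun, if_neg (by omega)]
      congr 2
      rw [Nat.cast_sub (by omega)]
      norm_num
    have hsub : S.image (fun x : ℕ => x - 1) ⊆ Finset.Icc 2 N := by
      intro j hj
      obtain ⟨p, hp, rfl⟩ := Finset.mem_image.mp hj
      obtain ⟨hpp, h3, hle⟩ := hSmem p hp
      rw [Finset.mem_Icc]
      omega
    have hfac01 : ∀ j ∈ Finset.Icc 2 N, (0:ℝ) ≤ 1 - 1/(j:ℝ)^2 ∧ 1 - 1/(j:ℝ)^2 ≤ 1 := by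
      intro j hj
      rw [Finset.mem_Icc] at hj
      have h2r : (2:ℝ) ≤ (j:ℝ) := by exact_mod_cast hj.1
      have h4 : (4:ℝ) ≤ (j:ℝ)^2 := by nlinarith
      have hpos : (0:ℝ) < (j:ℝ)^2 := by nlinarith
      constructor
      · have : 1/(j:ℝ)^2 ≤ 1/4 := by
          apply div_le_div_of_nonneg_left <;> nlinarith
        linarith
      · have : (0:ℝ) ≤ 1/(j:ℝ)^2 := by positivity
        linarith
    have hge : ((N:ℝ)+1)/(2*(N:ℝ))
        ≤ ∏ j ∈ S.image (fun x : ℕ => x - 1), (1 - 1/(j:ℝ)^2) := by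
      rw [← prod_Icc_telescope N (by omega), ← Finset.prod_sdiff hsub]
      have h1 : ∏ j ∈ (Finset.Icc 2 N) \ S.image (fun x : ℕ => x - 1), (1 - 1/(j:ℝ)^2) ≤ 1 :=
        Finset.prod_le_one (fun j hj => (hfac01 j (Finset.mem_sdiff.mp hj).1).1)
          (fun j hj => (hfac01 j (Finset.mem_sdiff.mp hj).1).2)
      have h0 : (0:ℝ) ≤ ∏ j ∈ S.image (fun x : ℕ => x - 1), (1 - 1/(j:ℝ)^2) :=
        Finset.prod_nonneg (fun j hj => (hfac01 j (hsub hj)).1)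
      nlinarith
    rw [hb2, himg]
    have hNr : (1:ℝ) ≤ (N:ℝ) := by exact_mod_cast (by omega : 1 ≤ N)
    have : (1:ℝ) ≤ 2 * (((N:ℝ)+1)/(2*(N:ℝ))) := by
      rw [mul_div_assoc']
      rw [le_div_iff₀ (by linarith)]
      linarith
    nlinarith [hge, this]

/-! ### Putting it all together -/

lemma term_eq (m q : ℕ) :
    ((moebius q : ℤ) : ℂ) ^ 2 * ramanujanSum q (-(m : ℤ)) / ((Nat.totient q : ℕ) : ℂ) ^ 2
      = ((F m q : ℝ) : ℂ) := by
  rcases Nat.eq_zero_or_pos q with rfl | hq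
  · simp [ramanujanSum, F_zero]
  · rw [ram_eq_Rf m q hq, F]
    push_cast
    rfl

lemma one_le_tsum_F (m : ℕ) (hm : m ≠ 0) (h2 : 2 ∣ m) : 1 ≤ ∑' q : ℕ, F m q := by
  have hmul : ∀ {a b : ℕ}, Nat.Coprime a b → F m (a * b) = F m a * F m b :=
    fun hab => F_mult m hab
  have htend := EulerProduct.eulerProduct (f := F m) (F_one m) hmul
    (F_summable_norm m hm) (F_zero m)
  refine ge_of_tendsto' htend fun N => ?_
  have hfac : ∏ p ∈ N.primesBelow, ∑' e : ℕ, F m (p ^ e)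
      = ∏ p ∈ N.primesBelow, (1 + F m p) :=
    Finset.prod_congr rfl fun p hp => tsum_F_pow m (Nat.prime_of_mem_primesBelow hp)
  rw [hfac]
  calc (1:ℝ) ≤ ∏ p ∈ N.primesBelow, bfun p := prod_bfun_ge N
    _ ≤ ∏ p ∈ N.primesBelow, (1 + F m p) :=
        Finset.prod_le_prod
          (fun p hp => (bfun_pos (Nat.prime_of_mem_primesBelow hp)).le)
          (fun p hp => F_prime_ge m p (Nat.prime_of_mem_primesBelow hp) h2)

end Goldbach

/-- The singular series for the Goldbach problem is bounded below: there is an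
absolute constant `c > 0` such that for every positive integer `n`,
`∑_{q=1}^∞ μ(q)² c_q(−2n)/φ(q)² ≥ c` (the sum being a real number, we take the
real part of the complex expression). -/
theorem stmt_12 : ∃ c > 0, ∀ n : ℕ, 0 < n →
    c ≤ (∑' q : ℕ, ((ArithmeticFunction.moebius q : ℂ)) ^ 2 *
        ramanujanSum q (-(2 * n)) / ((Nat.totient q : ℂ)) ^ 2).re := by
  refine ⟨1, one_pos, fun n hn => ?_⟩
  set m : ℕ := 2 * n with hm
  have hm0 : m ≠ 0 := by positivity
  have h2m : 2 ∣ m := ⟨n, rfl⟩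
  have hterm : ∀ q : ℕ, ((ArithmeticFunction.moebius q : ℂ)) ^ 2 *
      ramanujanSum q (-(2 * n)) / ((Nat.totient q : ℂ)) ^ 2 = ((Goldbach.F m q : ℝ) : ℂ) := by
    intro q
    have : (-(2 * (n:ℤ))) = -(m : ℤ) := by push_cast [hm]; ring
    rw [this]
    exact Goldbach.term_eq m q
  rw [tsum_congr hterm, ← Complex.ofReal_tsum, Complex.ofReal_re]
  exact Goldbach.one_le_tsum_F m hm0 h2m
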